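/- Convergence of MOCCA implies criticality (Theorem 1). Suppose the approximation families (F_v), (G_z) satisfy the standing conditions, and additionally that the map (v,w) ↦ ∇(F − F_v)(w) is jointly continuous in (v,w) and the map (z,x) ↦ ∇(G − G_z)(x) is jointly continuous in (z,x). Let θ ∈ [0,1], let Σ ∈ ℝ^{m×m} and T ∈ ℝ^{d×d} be diagonal matrices with positive diagonal entries, and let L_1, L_2, … ≥ 1 be inner-loop lengths. Suppose sequences x_{t;ℓ} ∈ ℝ^d, w_{t;ℓ} ∈ ℝ^m (t ≥ 1, 0 ≤ ℓ ≤ L_t), x_t, z_t ∈ ℝ^d, w_t ∈ ℝ^m, v_t ∈ ℝ^m satisfy, for every t ≥ 0 and 1 ≤ ℓ ≤ L_{t+1}: (i) (x_{t+1;0}, w_{t+1;0}) = (x_t, w_t); (ii) T^{-1}(x_{t+1;ℓ-1} − x_{t+1;ℓ}) − Kᵀ w_{t+1;ℓ-1} ∈ ∂G_{z_t}(x_{t+1;ℓ}); (iii) w_{t+1;ℓ} ∈ ∂F_{v_t}(Σ^{-1}(w_{t+1;ℓ-1} − w_{t+1;ℓ}) + K x̄_{t+1;ℓ}) where x̄_{t+1;ℓ}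 = x_{t+1;ℓ} + θ(x_{t+1;ℓ} − x_{t+1;ℓ-1}); (iv) x_{t+1} = (1/L_{t+1}) Σ_{ℓ=1}^{L_{t+1}} x_{t+1;ℓ}, w_{t+1} = (1/L_{t+1}) Σ_{ℓ=1}^{L_{t+1}} w_{t+1;ℓ}, z_{t+1} = x_{t+1}, and v_{t+1} = (1/L_{t+1}) Σ_{ℓ=1}^{L_{t+1}} (Σ^{-1}(w_{t+1;ℓ-1} − w_{t+1;ℓ}) + K x̄_{t+1;ℓ}). If the concatenated sequence (x_{t;ℓ}) converges to a point x̂ ∈ ℝ^d, (w_{t;ℓ}) converges to ŵ ∈ ℝ^m, z_t converges to ẑ, and v_t converges to v̂, then x̂ is a critical point of the original problem: there exist a ∈ ∂F_{K x̂}(K x̂) and b ∈ ∂G_{x̂}(x̂) with Kᵀ a + b = 0. -/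

import Mathlib

open Matrix

noncomputable section

/-- The continuous linear map `x ↦ ⟨g, x⟩` on `ℝ^n`, used to express gradients. -/
def dotCLM {n : ℕ} (g : Fin n → ℝ) : (Fin n → ℝ) →L[ℝ] ℝ :=
  LinearMap.toContinuousLinearMap
    { toFun := fun x => g ⬝ᵥ x
      map_add' := fun x y => by simp [dotProduct_add]
      map_smul' := fun c x => by simp [dotProduct_smul] }

/-- Euclidean norm `‖x‖₂`. -/
def e2 {n : Type*} [Fintype n] (x : n → ℝ) : ℝ := Real.sqrt (x ⬝ᵥ x)

/-- `g` is a subgradient of `φ` at `x`. -/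
def IsSubgrad {n : Type*} [Fintype n] (φ : (n → ℝ) → ℝ) (x g : n → ℝ) : Prop :=
  ∀ y, φ x + g ⬝ᵥ (y - x) ≤ φ y

open Filter Topology

lemma dotCLM_apply {n : ℕ} (g x : Fin n → ℝ) : dotCLM g x = g ⬝ᵥ x := rfl

lemma norm_le_e2 {n : ℕ} (u : Fin n → ℝ) : ‖u‖ ≤ e2 u := by
  have h0 : 0 ≤ e2 u := Real.sqrt_nonneg _
  refine (pi_norm_le_iff_of_nonneg h0).2 fun i => ?_
  have h1 : u i * u i ≤ u ⬝ᵥ u :=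
    Finset.single_le_sum (f := fun j => u j * u j) (fun j _ => mul_self_nonneg _)
      (Finset.mem_univ i)
  calc ‖u i‖ = Real.sqrt (u i * u i) := by
        rw [Real.sqrt_mul_self_eq_abs]; rfl
    _ ≤ e2 u := Real.sqrt_le_sqrt h1

/-- The continuous linear map given by matrix-vector multiplication. -/
def mvCLM {a b : ℕ} (A : Matrix (Fin a) (Fin b) ℝ) : (Fin b → ℝ) →L[ℝ] (Fin a → ℝ) :=
  LinearMap.toContinuousLinearMap A.mulVecLin

lemma mvCLM_apply {a b : ℕ} (A : Matrix (Fin a) (Fin b) ℝ) (u : Fin b → ℝ) :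
    mvCLM A u = A.mulVec u := rfl

/-- Uniform convergence of a double-indexed family over the inner loops. -/
def UTo {n : ℕ} (L : ℕ → ℕ) (f : ℕ → ℕ → Fin n → ℝ) (c : Fin n → ℝ) : Prop :=
  ∀ ε : ℝ, 0 < ε → ∃ N, ∀ t, N ≤ t → ∀ ℓ, ℓ ≤ L t → ‖f t ℓ - c‖ < ε

namespace UTo
variable {n : ℕ} {L : ℕ → ℕ} {f g : ℕ → ℕ → Fin n → ℝ} {c c' : Fin n → ℝ}

lemma congr (hf : UTo L f c) (hfg : ∀ t ℓ, f t ℓ = g t ℓ) (hcc : c = c') : UTo L g c' := by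
  intro ε hε; obtain ⟨N, hN⟩ := hf ε hε
  exact ⟨N, fun t ht ℓ hℓ => by rw [← hfg, ← hcc]; exact hN t ht ℓ hℓ⟩

lemma add (hf : UTo L f c) (hg : UTo L g c') : UTo L (fun t ℓ => f t ℓ + g t ℓ) (c + c') := by
  intro ε hε
  obtain ⟨N1, h1⟩ := hf (ε/2) (by positivity)
  obtain ⟨N2, h2⟩ := hg (ε/2) (by positivity)
  refine ⟨max N1 N2, fun t ht ℓ hℓ => ?_⟩
  have e1 := h1 t (le_trans (le_max_left _ _) ht) ℓ hℓ
  have e2 := h2 t (le_trans (le_max_right _ _) ht) ℓ hℓ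
  have : f t ℓ + g t ℓ - (c + c') = (f t ℓ - c) + (g t ℓ - c') := by abel
  rw [this]
  calc ‖(f t ℓ - c) + (g t ℓ - c')‖ ≤ ‖f t ℓ - c‖ + ‖g t ℓ - c'‖ := norm_add_le _ _
    _ < ε := by linarith

lemma sub (hf : UTo L f c) (hg : UTo L g c') : UTo L (fun t ℓ => f t ℓ - g t ℓ) (c - c') := by
  intro ε hε
  obtain ⟨N1, h1⟩ := hf (ε/2) (by positivity)
  obtain ⟨N2, h2⟩ := hg (ε/2) (by positivity)
  refine ⟨max N1 N2, fun t ht ℓ hℓ => ?_⟩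
  have e1 := h1 t (le_trans (le_max_left _ _) ht) ℓ hℓ
  have e2 := h2 t (le_trans (le_max_right _ _) ht) ℓ hℓ
  have : f t ℓ - g t ℓ - (c - c') = (f t ℓ - c) - (g t ℓ - c') := by abel
  rw [this]
  calc ‖(f t ℓ - c) - (g t ℓ - c')‖ ≤ ‖f t ℓ - c‖ + ‖g t ℓ - c'‖ := norm_sub_le _ _
    _ < ε := by linarith

lemma smul (hf : UTo L f c) (θ : ℝ) : UTo L (fun t ℓ => θ • f t ℓ) (θ • c) := by
  intro ε hε
  obtain ⟨N, hN⟩ := hf (ε / (|θ| + 1)) (by positivity)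
  refine ⟨N, fun t ht ℓ hℓ => ?_⟩
  have e1 := hN t ht ℓ hℓ
  have : θ • f t ℓ - θ • c = θ • (f t ℓ - c) := by rw [smul_sub]
  rw [this, norm_smul]
  have h1 : |θ| * ‖f t ℓ - c‖ ≤ |θ| * (ε / (|θ| + 1)) := by
    apply mul_le_mul_of_nonneg_left e1.le (abs_nonneg _)
  have h2 : |θ| * (ε / (|θ| + 1)) < (|θ| + 1) * (ε / (|θ| + 1)) := by
    apply mul_lt_mul_of_pos_right (by linarith) (by positivity)
  have h3 : (|θ| + 1) * (ε / (|θ| + 1)) = ε := by field_simp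
  calc ‖θ‖ * ‖f t ℓ - c‖ = |θ| * ‖f t ℓ - c‖ := by rw [Real.norm_eq_abs]
    _ < ε := by rw [← h3]; exact lt_of_le_of_lt h1 h2

lemma clm {a : ℕ} (hf : UTo L f c) (M : (Fin n → ℝ) →L[ℝ] (Fin a → ℝ)) :
    UTo L (fun t ℓ => M (f t ℓ)) (M c) := by
  intro ε hε
  obtain ⟨N, hN⟩ := hf (ε / (‖M‖ + 1)) (by positivity)
  refine ⟨N, fun t ht ℓ hℓ => ?_⟩
  have e1 := hN t ht ℓ hℓ
  have : M (f t ℓ) - M c = M (f t ℓ - c) := by rw [map_sub]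
  rw [this]
  calc ‖M (f t ℓ - c)‖ ≤ ‖M‖ * ‖f t ℓ - c‖ := M.le_opNorm _
    _ ≤ ‖M‖ * (ε / (‖M‖ + 1)) := mul_le_mul_of_nonneg_left e1.le (norm_nonneg _)
    _ < (‖M‖ + 1) * (ε / (‖M‖ + 1)) := mul_lt_mul_of_pos_right (by linarith) (by positivity)
    _ = ε := by field_simp

lemma pred (hf : UTo L f c) : UTo L (fun t ℓ => f t (ℓ - 1)) c := by
  intro ε hε; obtain ⟨N, hN⟩ := hf ε hε
  exact ⟨N, fun t ht ℓ hℓ => hN t ht (ℓ - 1) (le_trans (Nat.sub_le _ _) hℓ)⟩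

lemma tendsto_sel (hf : UTo L f c) (sel : ℕ → ℕ) (hsel : ∀ t, sel t ≤ L t) :
    Tendsto (fun t => f t (sel t)) atTop (𝓝 c) := by
  rw [Metric.tendsto_atTop]
  intro ε hε
  obtain ⟨N, hN⟩ := hf ε hε
  exact ⟨N, fun t ht => by rw [dist_eq_norm]; exact hN t ht (sel t) (hsel t)⟩

lemma tendsto_avg (hf : UTo L f c) (hL : ∀ t, 1 ≤ t → 1 ≤ L t) :
    Tendsto (fun t => (L t : ℝ)⁻¹ • ∑ ℓ ∈ Finset.Icc 1 (L t), f t ℓ) atTop (𝓝 c) := by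
  rw [Metric.tendsto_atTop]
  intro ε hε
  obtain ⟨N, hN⟩ := hf (ε/2) (by positivity)
  refine ⟨max N 1, fun t ht => ?_⟩
  have ht1 : 1 ≤ t := le_trans (le_max_right _ _) ht
  have htN : N ≤ t := le_trans (le_max_left _ _) ht
  have hLt : 1 ≤ L t := hL t ht1
  have hLpos : (0:ℝ) < (L t : ℝ) := by exact_mod_cast hLt
  have hcard : (Finset.Icc 1 (L t)).card = L t := by
    rw [Nat.card_Icc]; omega
  rw [dist_eq_norm]
  have key : (L t : ℝ)⁻¹ • ∑ ℓ ∈ Finset.Icc 1 (L t), f t ℓ - c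
      = (L t : ℝ)⁻¹ • ∑ ℓ ∈ Finset.Icc 1 (L t), (f t ℓ - c) := by
    rw [Finset.sum_sub_distrib, smul_sub, Finset.sum_const, hcard, ← Nat.cast_smul_eq_nsmul ℝ,
      smul_smul, inv_mul_cancel₀ hLpos.ne', one_smul]
  rw [key, norm_smul]
  have h1 : ‖∑ ℓ ∈ Finset.Icc 1 (L t), (f t ℓ - c)‖ ≤ (L t : ℝ) * (ε/2) := by
    calc ‖∑ ℓ ∈ Finset.Icc 1 (L t), (f t ℓ - c)‖ ≤ ∑ ℓ ∈ Finset.Icc 1 (L t), ‖f t ℓ - c‖ :=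
          norm_sum_le _ _
      _ ≤ ∑ _ℓ ∈ Finset.Icc 1 (L t), (ε/2) := by
          refine Finset.sum_le_sum fun ℓ hℓ => ?_
          exact (hN t htN ℓ (Finset.mem_Icc.mp hℓ).2).le
      _ = (L t : ℝ) * (ε/2) := by rw [Finset.sum_const, hcard, nsmul_eq_mul]
  calc ‖(L t : ℝ)⁻¹‖ * ‖∑ ℓ ∈ Finset.Icc 1 (L t), (f t ℓ - c)‖
      ≤ (L t : ℝ)⁻¹ * ((L t : ℝ) * (ε/2)) := by
        rw [Real.norm_eq_abs, abs_of_pos (by positivity)]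
        exact mul_le_mul_of_nonneg_left h1 (by positivity)
    _ = ε/2 := by field_simp
    _ < ε := by linarith

end UTo

/-- FTC representation for the difference of a parametrized differentiable function. -/
lemma diff_rep {n : ℕ} (ψ : (Fin n → ℝ) → (Fin n → ℝ) → ℝ)
    (grad : (Fin n → ℝ) → (Fin n → ℝ) → (Fin n → ℝ))
    (hdiff : ∀ p x, HasFDerivAt (ψ p) (dotCLM (grad p x)) x)
    (hjc : Continuous fun q : ((Fin n → ℝ) × (Fin n → ℝ)) => grad q.1 q.2)
    (p x y : Fin n → ℝ) :
    ψ p y - ψ p x = ∫ s in (0:ℝ)..1, grad p (x + s • (y - x)) ⬝ᵥ (y - x) := by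
  have hline : ∀ s : ℝ, HasDerivAt (fun s : ℝ => x + s • (y - x)) (y - x) s := by
    intro s
    have := ((hasDerivAt_id s).smul_const (y - x)).const_add x
    simpa using this
  have hcomp : ∀ s : ℝ, HasDerivAt (fun s : ℝ => ψ p (x + s • (y - x)))
      (grad p (x + s • (y - x)) ⬝ᵥ (y - x)) s := by
    intro s
    have := (hdiff p (x + s • (y - x))).comp_hasDerivAt s (hline s)
    simpa [dotCLM_apply, Function.comp_def] using this
  have hcont : Continuous fun s : ℝ => grad p (x + s • (y - x)) ⬝ᵥ (y - x) := by
    apply Continuous.dotProduct _ continuous_const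
    exact hjc.comp (continuous_const.prodMk (continuous_const.add
      (continuous_id.smul continuous_const)))
  have := intervalIntegral.integral_eq_sub_of_hasDerivAt (f := fun s : ℝ => ψ p (x + s • (y - x)))
    (fun s _ => hcomp s) (hcont.intervalIntegrable 0 1)
  rw [this]
  norm_num

/-- Joint continuity of differences of the parametrized family. -/
lemma diff_cont {n : ℕ} (ψ : (Fin n → ℝ) → (Fin n → ℝ) → ℝ)
    (grad : (Fin n → ℝ) → (Fin n → ℝ) → (Fin n → ℝ))
    (hdiff : ∀ p x, HasFDerivAt (ψ p) (dotCLM (grad p x)) x)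
    (hjc : Continuous fun q : ((Fin n → ℝ) × (Fin n → ℝ)) => grad q.1 q.2) :
    Continuous fun q : ((Fin n → ℝ) × (Fin n → ℝ) × (Fin n → ℝ)) =>
      ψ q.1 q.2.2 - ψ q.1 q.2.1 := by
  have hrep : (fun q : ((Fin n → ℝ) × (Fin n → ℝ) × (Fin n → ℝ)) =>
      ψ q.1 q.2.2 - ψ q.1 q.2.1) = fun q => ∫ s in (0:ℝ)..1,
      grad q.1 (q.2.1 + s • (q.2.2 - q.2.1)) ⬝ᵥ (q.2.2 - q.2.1) :=
    funext fun q => diff_rep ψ grad hdiff hjc q.1 q.2.1 q.2.2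
  rw [hrep]
  apply intervalIntegral.continuous_parametric_intervalIntegral_of_continuous'
  refine Continuous.dotProduct ?_ ?_
  · exact hjc.comp (Continuous.prodMk (continuous_fst.fst)
      ((continuous_fst.snd.fst).add
        (continuous_snd.smul (continuous_fst.snd.snd.sub continuous_fst.snd.fst))))
  · exact (continuous_fst.snd.snd.sub continuous_fst.snd.fst)

set_option maxHeartbeats 1000000 in
/-- Limits of subgradients of a continuously varying family are subgradients. -/
lemma isSubgrad_limit {n : ℕ} (φ : (Fin n → ℝ) → (Fin n → ℝ) → ℝ)
    (hD : Continuous fun q : ((Fin n → ℝ) × (Fin n → ℝ) × (Fin n → ℝ)) =>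
      φ q.1 q.2.2 - φ q.1 q.2.1)
    (p x g : ℕ → Fin n → ℝ) (phat xhat ghat : Fin n → ℝ)
    (hp : Tendsto p atTop (𝓝 phat)) (hx : Tendsto x atTop (𝓝 xhat))
    (hg : Tendsto g atTop (𝓝 ghat))
    (hsub : ∀ t, IsSubgrad (φ (p t)) (x t) (g t)) :
    IsSubgrad (φ phat) xhat ghat := by
  intro y
  have hdp : Continuous fun q : ((Fin n → ℝ) × (Fin n → ℝ)) => q.1 ⬝ᵥ (y - q.2) :=
    continuous_fst.dotProduct (continuous_const.sub continuous_snd)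
  have h1 : Tendsto (fun t => g t ⬝ᵥ (y - x t)) atTop (𝓝 (ghat ⬝ᵥ (y - xhat))) :=
    (hdp.tendsto (ghat, xhat)).comp (hg.prodMk_nhds hx)
  have h2 : Tendsto (fun t => φ (p t) y - φ (p t) (x t)) atTop
      (𝓝 (φ phat y - φ phat xhat)) :=
    (hD.tendsto (phat, xhat, y)).comp (hp.prodMk_nhds (hx.prodMk_nhds tendsto_const_nhds))
  have h3 : ghat ⬝ᵥ (y - xhat) ≤ φ phat y - φ phat xhat :=
    le_of_tendsto_of_tendsto' h1 h2 (fun t => by have := hsub t y; linarith)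
  linarith

/-- **Theorem 1 of MOCCA (Barber–Sidky)**: if the (stable, inner-loop) MOCCA algorithm
converges to a point, then the limit is a critical point of the original problem. -/
theorem mocca_theorem1
    (d m : ℕ) (K : Matrix (Fin m) (Fin d) ℝ)
    (F : (Fin m → ℝ) → ℝ) (G : (Fin d → ℝ) → ℝ)
    (Fv : (Fin m → ℝ) → (Fin m → ℝ) → ℝ) (Gz : (Fin d → ℝ) → (Fin d → ℝ) → ℝ)
    (gradF : (Fin m → ℝ) → (Fin m → ℝ) → Fin m → ℝ)
    (gradG : (Fin d → ℝ) → (Fin d → ℝ) → Fin d → ℝ)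
    -- standing conditions (4): F_v, G_z convex and continuous, F − F_v and G − G_z
    -- differentiable with gradients gradF, gradG vanishing at the expansion point
    (hFvconv : ∀ v', ConvexOn ℝ Set.univ (Fv v'))
    (hFvcont : ∀ v', Continuous (Fv v'))
    (hGzconv : ∀ z', ConvexOn ℝ Set.univ (Gz z'))
    (hGzcont : ∀ z', Continuous (Gz z'))
    (hFdiff : ∀ v' w', HasFDerivAt (fun u => F u - Fv v' u) (dotCLM (gradF v' w')) w')
    (hGdiff : ∀ z' x', HasFDerivAt (fun u => G u - Gz z' u) (dotCLM (gradG z' x')) x')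
    (hFfo : ∀ v', gradF v' v' = 0)
    (hGfo : ∀ z', gradG z' z' = 0)
    -- joint continuity (22)
    (hFjc : Continuous fun p : (Fin m → ℝ) × (Fin m → ℝ) => gradF p.1 p.2)
    (hGjc : Continuous fun p : (Fin d → ℝ) × (Fin d → ℝ) => gradG p.1 p.2)
    -- step sizes: θ ∈ [0,1], Σ, T diagonal with positive diagonal entries
    (θ : ℝ) (hθ0 : 0 ≤ θ) (hθ1 : θ ≤ 1)
    (σv : Fin m → ℝ) (τv : Fin d → ℝ) (hσ : ∀ i, 0 < σv i) (hτ : ∀ i, 0 < τv i)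
    -- inner-loop lengths L_1, L_2, … ≥ 1
    (L : ℕ → ℕ) (hL : ∀ t, 1 ≤ t → 1 ≤ L t)
    -- iterates of Algorithm 2
    (x z : ℕ → Fin d → ℝ) (w v : ℕ → Fin m → ℝ)
    (xi : ℕ → ℕ → Fin d → ℝ) (wi : ℕ → ℕ → Fin m → ℝ)
    -- (i) initialization of each inner loop
    (hinit : ∀ t, xi (t + 1) 0 = x t ∧ wi (t + 1) 0 = w t)
    -- (ii) primal update
    (hx : ∀ t ℓ, 1 ≤ ℓ → ℓ ≤ L (t + 1) →
      IsSubgrad (Gz (z t)) (xi (t + 1) ℓ)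
        ((Matrix.diagonal τv)⁻¹.mulVec (xi (t + 1) (ℓ - 1) - xi (t + 1) ℓ)
          - Kᵀ.mulVec (wi (t + 1) (ℓ - 1))))
    -- (iii) dual update, with extrapolation x̄ = x_ℓ + θ(x_ℓ − x_{ℓ−1})
    (hw : ∀ t ℓ, 1 ≤ ℓ → ℓ ≤ L (t + 1) →
      IsSubgrad (Fv (v t))
        ((Matrix.diagonal σv)⁻¹.mulVec (wi (t + 1) (ℓ - 1) - wi (t + 1) ℓ)
          + K.mulVec (xi (t + 1) ℓ + θ • (xi (t + 1) ℓ - xi (t + 1) (ℓ - 1))))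
        (wi (t + 1) ℓ))
    -- (iv) averaged updates of iterates and expansion points
    (hxavg : ∀ t, x (t + 1) = (L (t + 1) : ℝ)⁻¹ • ∑ ℓ ∈ Finset.Icc 1 (L (t + 1)), xi (t + 1) ℓ)
    (hwavg : ∀ t, w (t + 1) = (L (t + 1) : ℝ)⁻¹ • ∑ ℓ ∈ Finset.Icc 1 (L (t + 1)), wi (t + 1) ℓ)
    (hzavg : ∀ t, z (t + 1) = x (t + 1))
    (hvavg : ∀ t, v (t + 1) = (L (t + 1) : ℝ)⁻¹ • ∑ ℓ ∈ Finset.Icc 1 (L (t + 1)),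
      ((Matrix.diagonal σv)⁻¹.mulVec (wi (t + 1) (ℓ - 1) - wi (t + 1) ℓ)
        + K.mulVec (xi (t + 1) ℓ + θ • (xi (t + 1) ℓ - xi (t + 1) (ℓ - 1)))))
    -- convergence of the (concatenated) iterate sequences and of the expansion points
    (xhat zhat : Fin d → ℝ) (what vhat : Fin m → ℝ)
    (hxconv : ∀ ε : ℝ, 0 < ε → ∃ N, ∀ t, N ≤ t → ∀ ℓ, ℓ ≤ L t → e2 (xi t ℓ - xhat) < ε)
    (hwconv : ∀ ε : ℝ, 0 < ε → ∃ N, ∀ t, N ≤ t → ∀ ℓ, ℓ ≤ L t → e2 (wi t ℓ - what) < ε)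
    (hzconv : Filter.Tendsto z Filter.atTop (nhds zhat))
    (hvconv : Filter.Tendsto v Filter.atTop (nhds vhat)) :
    -- conclusion: x̂ is a critical point, 0 ∈ Kᵀ∂F_{Kx̂}(Kx̂) + ∂G_{x̂}(x̂)
    ∃ (a : Fin m → ℝ) (b : Fin d → ℝ),
      IsSubgrad (Fv (K.mulVec xhat)) (K.mulVec xhat) a ∧
      IsSubgrad (Gz xhat) xhat b ∧
      Kᵀ.mulVec a + b = 0 := by
  -- uniform convergence of the inner iterates
  have hxU : UTo L xi xhat := by
    intro ε hε
    obtain ⟨N, hN⟩ := hxconv ε hε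
    exact ⟨N, fun t ht ℓ hℓ => lt_of_le_of_lt (norm_le_e2 _) (hN t ht ℓ hℓ)⟩
  have hwU : UTo L wi what := by
    intro ε hε
    obtain ⟨N, hN⟩ := hwconv ε hε
    exact ⟨N, fun t ht ℓ hℓ => lt_of_le_of_lt (norm_le_e2 _) (hN t ht ℓ hℓ)⟩
  have hshift : Tendsto (fun t : ℕ => t + 1) atTop atTop := tendsto_add_atTop_nat 1
  have hselL : ∀ t, L t ≤ L t := fun _ => le_refl _
  -- the argument sequence of the dual updates converges uniformly to K x̂
  have huU : UTo L (fun t ℓ => (Matrix.diagonal σv)⁻¹.mulVec (wi t (ℓ - 1) - wi t ℓ)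
      + K.mulVec (xi t ℓ + θ • (xi t ℓ - xi t (ℓ - 1)))) (K.mulVec xhat) := by
    have h1 : UTo L (fun t ℓ => wi t (ℓ - 1) - wi t ℓ) (what - what) := hwU.pred.sub hwU
    have h2 : UTo L (fun t ℓ => xi t ℓ + θ • (xi t ℓ - xi t (ℓ - 1)))
        (xhat + θ • (xhat - xhat)) := hxU.add ((hxU.sub hxU.pred).smul θ)
    have h3 := (h1.clm (mvCLM ((Matrix.diagonal σv)⁻¹))).add (h2.clm (mvCLM K))
    refine h3.congr (fun t ℓ => rfl) ?_
    simp [mvCLM_apply, sub_self, Matrix.mulVec_zero, smul_zero, add_zero]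
  have hu : Tendsto (fun t => (Matrix.diagonal σv)⁻¹.mulVec
        (wi (t + 1) (L (t + 1) - 1) - wi (t + 1) (L (t + 1)))
      + K.mulVec (xi (t + 1) (L (t + 1))
        + θ • (xi (t + 1) (L (t + 1)) - xi (t + 1) (L (t + 1) - 1))))
      atTop (𝓝 (K.mulVec xhat)) := (huU.tendsto_sel L hselL).comp hshift
  have hglim : Tendsto (fun t => wi (t + 1) (L (t + 1))) atTop (𝓝 what) :=
    (hwU.tendsto_sel L hselL).comp hshift
  have hxsel : Tendsto (fun t => xi (t + 1) (L (t + 1))) atTop (𝓝 xhat) :=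
    (hxU.tendsto_sel L hselL).comp hshift
  -- identification of the limits of the expansion points: v̂ = K x̂ and ẑ = x̂
  have hvlim : Tendsto (fun t => v (t + 1)) atTop (𝓝 (K.mulVec xhat)) :=
    Filter.Tendsto.congr (fun t => (hvavg t).symm) ((huU.tendsto_avg hL).comp hshift)
  have hvw : vhat = K.mulVec xhat := tendsto_nhds_unique (hvconv.comp hshift) hvlim
  have hzlim : Tendsto (fun t => z (t + 1)) atTop (𝓝 xhat) :=
    Filter.Tendsto.congr (fun t => by
      simp only [Function.comp_apply]; rw [← hxavg t, ← hzavg t])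
      ((hxU.tendsto_avg hL).comp hshift)
  have hzx : zhat = xhat := tendsto_nhds_unique (hzconv.comp hshift) hzlim
  -- joint continuity of differences of the local approximations
  have hFD : Continuous fun q : ((Fin m → ℝ) × (Fin m → ℝ) × (Fin m → ℝ)) =>
      Fv q.1 q.2.2 - Fv q.1 q.2.1 := by
    have hψ := diff_cont (fun p u => F u - Fv p u) gradF hFdiff hFjc
    have hFc : Continuous F := by
      have h0 : Continuous fun u => F u - Fv 0 u :=
        continuous_iff_continuousAt.2 fun u => (hFdiff 0 u).continuousAt
      have := h0.add (hFvcont 0)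
      simpa [Pi.add_def] using this
    have hall := ((hFc.comp (continuous_snd.comp continuous_snd)).sub
      (hFc.comp (continuous_fst.comp continuous_snd))).sub hψ
    exact hall.congr (fun q => by simp only [Pi.sub_apply, Function.comp_apply]; ring)
  have hGD : Continuous fun q : ((Fin d → ℝ) × (Fin d → ℝ) × (Fin d → ℝ)) =>
      Gz q.1 q.2.2 - Gz q.1 q.2.1 := by
    have hψ := diff_cont (fun p u => G u - Gz p u) gradG hGdiff hGjc
    have hGc : Continuous G := by
      have h0 : Continuous fun u => G u - Gz 0 u :=
        continuous_iff_continuousAt.2 fun u => (hGdiff 0 u).continuousAt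
      have := h0.add (hGzcont 0)
      simpa [Pi.add_def] using this
    have hall := ((hGc.comp (continuous_snd.comp continuous_snd)).sub
      (hGc.comp (continuous_fst.comp continuous_snd))).sub hψ
    exact hall.congr (fun q => by simp only [Pi.sub_apply, Function.comp_apply]; ring)
  -- pass to the limit in the dual update
  have hsubF : ∀ t, IsSubgrad (Fv (v t))
      ((Matrix.diagonal σv)⁻¹.mulVec
          (wi (t + 1) (L (t + 1) - 1) - wi (t + 1) (L (t + 1)))
        + K.mulVec (xi (t + 1) (L (t + 1))
          + θ • (xi (t + 1) (L (t + 1)) - xi (t + 1) (L (t + 1) - 1))))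
      (wi (t + 1) (L (t + 1))) := fun t =>
    hw t (L (t + 1)) (hL (t + 1) (by omega)) (le_refl _)
  have ha : IsSubgrad (Fv (K.mulVec xhat)) (K.mulVec xhat) what := by
    have := isSubgrad_limit Fv hFD v _ _ vhat (K.mulVec xhat) what hvconv hu hglim hsubF
    rwa [hvw] at this
  -- pass to the limit in the primal update
  have hbU : UTo L (fun t ℓ => (Matrix.diagonal τv)⁻¹.mulVec (xi t (ℓ - 1) - xi t ℓ)
      - Kᵀ.mulVec (wi t (ℓ - 1))) (-(Kᵀ.mulVec what)) := by
    have h1 := ((hxU.pred.sub hxU).clm (mvCLM ((Matrix.diagonal τv)⁻¹))).sub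
      (hwU.pred.clm (mvCLM Kᵀ))
    refine h1.congr (fun t ℓ => rfl) ?_
    simp [mvCLM_apply, sub_self, Matrix.mulVec_zero, zero_sub]
  have hblim : Tendsto (fun t => (Matrix.diagonal τv)⁻¹.mulVec
        (xi (t + 1) (L (t + 1) - 1) - xi (t + 1) (L (t + 1)))
      - Kᵀ.mulVec (wi (t + 1) (L (t + 1) - 1))) atTop (𝓝 (-(Kᵀ.mulVec what))) :=
    (hbU.tendsto_sel L hselL).comp hshift
  have hsubG : ∀ t, IsSubgrad (Gz (z t)) (xi (t + 1) (L (t + 1)))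
      ((Matrix.diagonal τv)⁻¹.mulVec
          (xi (t + 1) (L (t + 1) - 1) - xi (t + 1) (L (t + 1)))
        - Kᵀ.mulVec (wi (t + 1) (L (t + 1) - 1))) := fun t =>
    hx t (L (t + 1)) (hL (t + 1) (by omega)) (le_refl _)
  have hb : IsSubgrad (Gz xhat) xhat (-(Kᵀ.mulVec what)) := by
    have := isSubgrad_limit Gz hGD z _ _ zhat xhat (-(Kᵀ.mulVec what)) hzconv hxsel hblim hsubG
    rwa [hzx] at this
  exact ⟨what, -(Kᵀ.mulVec what), ha, hb, by simp⟩

end
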